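/- For each fixed θ ∈ ℝ, (η^{(r)}(rθ) − λ^{(r)}·r·θ − (1/2)·(λ^{(r)})³·(σ^{(r)})²·r²·θ²) / r² → 0 as r ↓ 0. -/

import Mathlib

open MeasureTheory

open Nat in

set_option maxHeartbeats 1000000 in
lemma taylor3 (x : ℝ) : |Real.exp x - (1 + x + x^2/2)| ≤ |x|^3 * Real.exp |x| / 6 := by
  have hexp : ∀ y : ℝ, Real.exp y = ∑' n : ℕ, y ^ n / n ! := by
    intro y
    rw [Real.exp_eq_exp_ℝ, NormedSpace.exp_eq_tsum_div]
  have hsum : ∀ y : ℝ, Summable (fun n : ℕ => y ^ n / (n ! : ℝ)) :=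
    Real.summable_pow_div_factorial
  have hshift : Summable (fun n : ℕ => x ^ (n + 3) / ((n + 3)! : ℝ)) :=
    (summable_nat_add_iff 3).2 (hsum x)
  have hsplit := (Summable.sum_add_tsum_nat_add 3 (hsum x)).symm
  have hhead : (∑ i ∈ Finset.range 3, x ^ i / (i ! : ℝ)) = 1 + x + x^2/2 := by
    norm_num [Finset.sum_range_succ]
  have heq : Real.exp x - (1 + x + x^2/2) = ∑' n : ℕ, x ^ (n + 3) / ((n + 3)! : ℝ) := by
    rw [hexp x, hsplit, hhead]; ring
  rw [heq]
  have hbound : ∀ n : ℕ, |x ^ (n + 3) / ((n + 3)! : ℝ)| ≤ |x|^3 / 6 * (|x| ^ n / n !) := by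
    intro n
    have hfacpos : (0:ℝ) < n ! := by exact_mod_cast Nat.factorial_pos n
    have hfac : (6 : ℝ) * n ! ≤ ((n + 3)! : ℝ) := by
      have h : (n+3)! = (n+3) * ((n+2) * ((n+1) * n !)) := by
        simp [Nat.factorial_succ]
      rw [h]
      push_cast
      have h6 : (6:ℝ) ≤ (↑n + 3) * ((↑n + 2) * (↑n + 1)) := by
        have hn : (0:ℝ) ≤ n := Nat.cast_nonneg n
        nlinarith [hn, mul_nonneg hn hn, mul_nonneg (mul_nonneg hn hn) hn]
      calc (6:ℝ) * n ! ≤ ((↑n + 3) * ((↑n + 2) * (↑n + 1))) * n ! :=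
            mul_le_mul_of_nonneg_right h6 hfacpos.le
        _ = (↑n + 3) * ((↑n + 2) * ((↑n + 1) * ↑n !)) := by ring
    rw [abs_div, abs_pow, Nat.abs_cast]
    calc |x|^(n+3) / ((n+3)! : ℝ) ≤ |x|^(n+3) / (6 * n !) := by gcongr
      _ = |x|^3/6 * (|x|^n / n !) := by
          rw [pow_add]
          field_simp
  have habs : |∑' n : ℕ, x ^ (n + 3) / ((n + 3)! : ℝ)|
      ≤ ∑' n : ℕ, |x ^ (n + 3) / ((n + 3)! : ℝ)| := by
    have h := norm_tsum_le_tsum_norm (f := fun n : ℕ => x ^ (n + 3) / ((n + 3)! : ℝ))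
      (by simp only [Real.norm_eq_abs]; exact hshift.abs)
    simp only [Real.norm_eq_abs] at h
    exact h
  refine habs.trans ?_
  have h2 : (∑' n : ℕ, |x ^ (n + 3) / ((n + 3)! : ℝ)|)
      ≤ ∑' n : ℕ, |x|^3 / 6 * (|x| ^ n / n !) :=
    Summable.tsum_le_tsum hbound hshift.abs ((hsum |x|).mul_left _)
  refine h2.trans ?_
  rw [tsum_mul_left, ← hexp]
  exact le_of_eq (by ring)


lemma intexp {Ω : Type*} [MeasurableSpace Ω] (μ : Measure Ω) [IsFiniteMeasure μ]
    (X : Ω → ℝ) (hXm : Measurable X) (B : ℝ) (hb : ∀ᵐ ω ∂μ, |X ω| ≤ B) (s : ℝ) :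
    Integrable (fun ω => Real.exp (-s * X ω)) μ := by
  apply Integrable.mono' (integrable_const (Real.exp (|s| * B)))
  · exact (hXm.const_mul (-s)).exp.aestronglyMeasurable
  · filter_upwards [hb] with ω hω
    rw [Real.norm_eq_abs, abs_of_pos (Real.exp_pos _)]
    apply Real.exp_le_exp.2
    calc -s * X ω ≤ |(-s) * X ω| := le_abs_self _
      _ = |s| * |X ω| := by rw [abs_mul, abs_neg]
      _ ≤ |s| * B := mul_le_mul_of_nonneg_left hω (abs_nonneg s)

lemma trap {Ω : Type*} [MeasurableSpace Ω] (μ : Measure Ω) [IsFiniteMeasure μ]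
    (X : Ω → ℝ) (hXm : Measurable X) (B : ℝ) (hB : ∀ᵐ ω ∂μ, 0 ≤ X ω ∧ |X ω| ≤ B)
    (a s c : ℝ) (haeq : ∫ ω, Real.exp (-a * X ω) ∂μ = c)
    (hslt : ∫ ω, Real.exp (-s * X ω) ∂μ < c) : a < s := by
  by_contra h
  push_neg at h
  have hmono : ∫ ω, Real.exp (-a * X ω) ∂μ ≤ ∫ ω, Real.exp (-s * X ω) ∂μ := by
    apply integral_mono_ae (intexp μ X hXm B (hB.mono fun ω hω => hω.2) a)
      (intexp μ X hXm B (hB.mono fun ω hω => hω.2) s)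
    filter_upwards [hB] with ω hω
    apply Real.exp_le_exp.2
    have := mul_le_mul_of_nonneg_right h hω.1
    nlinarith
  rw [haeq] at hmono
  linarith

lemma trap' {Ω : Type*} [MeasurableSpace Ω] (μ : Measure Ω) [IsFiniteMeasure μ]
    (X : Ω → ℝ) (hXm : Measurable X) (B : ℝ) (hB : ∀ᵐ ω ∂μ, 0 ≤ X ω ∧ |X ω| ≤ B)
    (a s c : ℝ) (haeq : ∫ ω, Real.exp (-a * X ω) ∂μ = c)
    (hsgt : c < ∫ ω, Real.exp (-s * X ω) ∂μ) : s < a := by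
  by_contra h
  push_neg at h
  have hmono : ∫ ω, Real.exp (-s * X ω) ∂μ ≤ ∫ ω, Real.exp (-a * X ω) ∂μ := by
    apply integral_mono_ae (intexp μ X hXm B (hB.mono fun ω hω => hω.2) s)
      (intexp μ X hXm B (hB.mono fun ω hω => hω.2) a)
    filter_upwards [hB] with ω hω
    apply Real.exp_le_exp.2
    have := mul_le_mul_of_nonneg_right h hω.1
    nlinarith
  rw [haeq] at hmono
  linarith

set_option maxHeartbeats 1000000 in
lemma core {Ω : Type*} [MeasurableSpace Ω] (μ : Measure Ω) [IsProbabilityMeasure μ]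
    (f : Ω → ℝ) (hf : Measurable f) (hfpos : ∀ᵐ ω ∂μ, 0 < f ω)
    (hint3 : Integrable (fun ω => f ω ^ 3) μ)
    (r θ ε m0 σ0 C mr v u s A W K : ℝ)
    (hr : 0 < r) (hr1 : r ≤ 1)
    (hC : ∫ ω, f ω ^ 3 ∂μ ≤ C)
    (hmr : mr = ∫ ω, f ω ∂μ)
    (hv : v = ∫ ω, (f ω - mr) ^ 2 ∂μ)
    (hm0 : 0 < m0) (hmlo : m0 / 2 ≤ mr) (hmhi : mr ≤ 2 * m0)
    (hσ0 : 0 < σ0) (hvhi : v ≤ 2 * σ0)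
    (hε : 0 < ε) (hu : |u| ≤ ε * r ^ 2)
    (hs : s = r * θ / mr + r ^ 2 * θ ^ 2 * v / (2 * mr ^ 3) + u)
    (hA : A = 2 * |θ| / m0 + 8 * θ ^ 2 * σ0 / m0 ^ 3 + ε)
    (hW : W = 8 * θ ^ 2 * σ0 / m0 ^ 3 + ε)
    (hK : K = (2 * σ0 + 4 * m0 ^ 2) * (2 * |θ| * W / m0 + W ^ 2 / 2)
      + A ^ 3 * Real.exp A * C / 6 + A * C + A ^ 2 * C / 2
      + |θ| ^ 3 * Real.exp |θ| / 6) :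
    |(∫ ω, Real.exp (-s * min (f ω) (1 / r)) ∂μ) - Real.exp (-(r * θ)) + u * mr|
      ≤ K * r ^ 3 := by
  have hmrpos : 0 < mr := lt_of_lt_of_le (by positivity) hmlo
  have hrinv : 0 < 1 / r := by positivity
  set X : Ω → ℝ := fun ω => min (f ω) (1 / r) with hX
  have hXm : Measurable X := hf.min measurable_const
  have hXae : ∀ᵐ ω ∂μ, 0 < X ω ∧ X ω ≤ 1 / r ∧ X ω ≤ f ω :=
    hfpos.mono fun ω hω => ⟨lt_min hω hrinv, min_le_right _ _, min_le_left _ _⟩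
  -- integrabilities
  have hXint : Integrable X μ := by
    apply Integrable.mono' (integrable_const (1 / r)) hXm.aestronglyMeasurable
    filter_upwards [hXae] with ω hω
    rw [Real.norm_eq_abs, abs_of_pos hω.1]; exact hω.2.1
  have hX2int : Integrable (fun ω => X ω ^ 2) μ := by
    apply Integrable.mono' (integrable_const ((1 / r) ^ 2))
      (hXm.pow_const 2).aestronglyMeasurable
    filter_upwards [hXae] with ω hω
    rw [Real.norm_eq_abs, abs_of_nonneg (by positivity : (0:ℝ) ≤ X ω ^ 2)]
    exact pow_le_pow_left₀ hω.1.le hω.2.1 2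
  have hX3int : Integrable (fun ω => X ω ^ 3) μ := by
    apply Integrable.mono' (integrable_const ((1 / r) ^ 3))
      (hXm.pow_const 3).aestronglyMeasurable
    filter_upwards [hXae] with ω hω
    rw [Real.norm_eq_abs, abs_of_pos (pow_pos hω.1 3)]
    exact pow_le_pow_left₀ hω.1.le hω.2.1 3
  have hfint : Integrable f μ := by
    apply Integrable.mono' ((integrable_const (1:ℝ)).add hint3) hf.aestronglyMeasurable
    filter_upwards [hfpos] with ω hω
    rw [Real.norm_eq_abs, abs_of_pos hω]
    simp only [Pi.add_apply]
    nlinarith [sq_nonneg (f ω - 1), sq_nonneg (f ω), mul_pos hω hω]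
  have hf2int : Integrable (fun ω => f ω ^ 2) μ := by
    apply Integrable.mono' ((integrable_const (1:ℝ)).add hint3)
      (hf.pow_const 2).aestronglyMeasurable
    filter_upwards [hfpos] with ω hω
    rw [Real.norm_eq_abs, abs_of_nonneg (by positivity : (0:ℝ) ≤ f ω ^ 2)]
    simp only [Pi.add_apply]
    nlinarith [sq_nonneg (f ω - 1), sq_nonneg (f ω), mul_pos hω hω]
  have hC0 : 0 ≤ C := by
    refine le_trans ?_ hC
    apply integral_nonneg_of_ae
    filter_upwards [hfpos] with ω hω
    positivity
  have hv0 : 0 ≤ v := by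
    rw [hv]; apply integral_nonneg; intro ω; positivity
  -- first moment bound
  set a : ℝ := ∫ ω, X ω ∂μ with ha
  set b : ℝ := ∫ ω, X ω ^ 2 ∂μ with hb
  have hma : |mr - a| ≤ C * r ^ 2 := by
    have heq : mr - a = ∫ ω, (f ω - X ω) ∂μ := by
      rw [hmr, ha, integral_sub hfint hXint]
    have hpt : ∀ᵐ ω ∂μ, 0 ≤ f ω - X ω ∧ f ω - X ω ≤ r ^ 2 * f ω ^ 3 := by
      filter_upwards [hfpos] with ω hω
      rcases le_or_gt (f ω) (1 / r) with hc | hc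
      · have hXeq : X ω = f ω := min_eq_left hc
        rw [hXeq]
        constructor
        · simp
        · simp; positivity
      · have hXeq : X ω = 1 / r := min_eq_right hc.le
        rw [hXeq]
        have h1 : 1 ≤ r * f ω := by
          rw [div_lt_iff₀ hr] at hc; linarith
        have h2 : (1:ℝ) ≤ (r * f ω)^2 := by nlinarith
        have h3 : f ω ≤ r^2 * f ω^3 := by nlinarith [mul_le_mul_of_nonneg_right h2 hω.le]
        constructor
        · linarith
        · linarith
    have h1 : mr - a ≤ C * r ^ 2 := by
      rw [heq]
      calc ∫ ω, (f ω - X ω) ∂μ ≤ ∫ ω, r ^ 2 * f ω ^ 3 ∂μ := by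
            apply integral_mono_ae (hfint.sub hXint) (hint3.const_mul _)
            filter_upwards [hpt] with ω hω using hω.2
        _ = r ^ 2 * ∫ ω, f ω ^ 3 ∂μ := integral_const_mul _ _
        _ ≤ r ^ 2 * C := by gcongr
        _ = C * r ^ 2 := by ring
    have h2 : 0 ≤ mr - a := by
      rw [heq]
      apply integral_nonneg_of_ae
      filter_upwards [hpt] with ω hω using hω.1
    rw [abs_of_nonneg h2]; exact h1
  -- second moment
  have hf2 : ∫ ω, f ω ^ 2 ∂μ = v + mr ^ 2 := by
    have hexpand : v = (∫ ω, f ω ^ 2 ∂μ) - mr ^ 2 := by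
      rw [hv]
      have h0 : (fun ω => (f ω - mr) ^ 2) = fun ω => (f ω ^ 2 - 2 * mr * f ω) + mr ^ 2 := by
        funext ω; ring
      have hgint : Integrable (fun ω => f ω ^ 2 - 2 * mr * f ω) μ :=
        hf2int.sub (hfint.const_mul _)
      rw [h0, integral_add hgint (integrable_const _),
        integral_sub hf2int (hfint.const_mul _), integral_const_mul, integral_const,
        probReal_univ, ← hmr]
      simp; ring
    linarith
  have hvb : |(v + mr ^ 2) - b| ≤ C * r := by
    have heq : (v + mr ^ 2) - b = ∫ ω, (f ω ^ 2 - X ω ^ 2) ∂μ := by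
      rw [← hf2, hb, integral_sub hf2int hX2int]
    have hpt : ∀ᵐ ω ∂μ, 0 ≤ f ω ^ 2 - X ω ^ 2 ∧ f ω ^ 2 - X ω ^ 2 ≤ r * f ω ^ 3 := by
      filter_upwards [hfpos] with ω hω
      rcases le_or_gt (f ω) (1 / r) with hc | hc
      · have hXeq : X ω = f ω := min_eq_left hc
        rw [hXeq]
        constructor
        · simp
        · simp; positivity
      · have hXeq : X ω = 1 / r := min_eq_right hc.le
        rw [hXeq]
        have h1 : 1 ≤ r * f ω := by
          rw [div_lt_iff₀ hr] at hc; linarith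
        have h2 : (1/r)^2 ≤ f ω ^2 := pow_le_pow_left₀ hrinv.le hc.le 2
        have h3 : f ω^2 ≤ r * f ω^3 := by nlinarith [mul_le_mul_of_nonneg_right h1 (sq_nonneg (f ω))]
        constructor
        · linarith
        · linarith [sq_nonneg (1/r)]
    have h1 : (v + mr ^ 2) - b ≤ C * r := by
      rw [heq]
      calc ∫ ω, (f ω ^ 2 - X ω ^ 2) ∂μ ≤ ∫ ω, r * f ω ^ 3 ∂μ := by
            apply integral_mono_ae (hf2int.sub hX2int) (hint3.const_mul _)
            filter_upwards [hpt] with ω hω using hω.2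
        _ = r * ∫ ω, f ω ^ 3 ∂μ := integral_const_mul _ _
        _ ≤ r * C := by gcongr
        _ = C * r := by ring
    have h2 : 0 ≤ (v + mr ^ 2) - b := by
      rw [heq]
      apply integral_nonneg_of_ae
      filter_upwards [hpt] with ω hω using hω.1
    rw [abs_of_nonneg h2]; exact h1
  have hX3 : ∫ ω, X ω ^ 3 ∂μ ≤ C := by
    refine le_trans ?_ hC
    apply integral_mono_ae hX3int hint3
    filter_upwards [hXae] with ω hω
    exact pow_le_pow_left₀ hω.1.le hω.2.2 3
  have hX30 : 0 ≤ ∫ ω, X ω ^ 3 ∂μ := by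
    apply integral_nonneg_of_ae
    filter_upwards [hXae] with ω hω
    exact (pow_pos hω.1 3).le
  -- Taylor expansion of the integral
  have hexpint : Integrable (fun ω => Real.exp (-s * X ω)) μ := by
    apply Integrable.mono' (integrable_const (Real.exp (|s| / r)))
      ((hXm.const_mul (-s)).exp.aestronglyMeasurable)
    filter_upwards [hXae] with ω hω
    rw [Real.norm_eq_abs, abs_of_pos (Real.exp_pos _)]
    apply Real.exp_le_exp.2
    calc -s * X ω ≤ |(-s) * X ω| := le_abs_self _
      _ = |s| * X ω := by rw [abs_mul, abs_neg, abs_of_pos hω.1]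
      _ ≤ |s| * (1/r) := mul_le_mul_of_nonneg_left hω.2.1 (abs_nonneg s)
      _ = |s| / r := by ring
  have hpolyint : Integrable (fun ω => 1 - s * X ω + s^2 * X ω^2 / 2) μ := by
    have h1 : Integrable (fun ω => 1 - s * X ω) μ :=
      (integrable_const 1).sub (hXint.const_mul s)
    have h2 : Integrable (fun ω => s^2 * X ω^2 / 2) μ :=
      (hX2int.const_mul (s^2)).div_const 2
    exact h1.add h2
  have hpolyval : ∫ ω, (1 - s * X ω + s^2 * X ω^2 / 2) ∂μ = 1 - s * a + s^2 * b / 2 := by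
    have h1 : Integrable (fun ω => 1 - s * X ω) μ :=
      (integrable_const 1).sub (hXint.const_mul s)
    have h2 : Integrable (fun ω => s^2 * X ω^2 / 2) μ :=
      (hX2int.const_mul (s^2)).div_const 2
    rw [integral_add h1 h2, integral_sub (integrable_const 1) (hXint.const_mul s),
      integral_div, integral_const_mul, integral_const_mul, integral_const, probReal_univ]
    simp [ha, hb]
  have hIT : |(∫ ω, Real.exp (-s * X ω) ∂μ) - (1 - s * a + s^2 * b / 2)|
      ≤ |s|^3 * Real.exp (|s| / r) * C / 6 := by
    have hdint : Integrable (fun ω => Real.exp (-s * X ω) - (1 - s * X ω + s^2 * X ω^2 / 2)) μ :=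
      hexpint.sub hpolyint
    have heq : (∫ ω, Real.exp (-s * X ω) ∂μ) - (1 - s * a + s^2 * b / 2)
        = ∫ ω, (Real.exp (-s * X ω) - (1 - s * X ω + s^2 * X ω^2 / 2)) ∂μ := by
      rw [integral_sub hexpint hpolyint, hpolyval]
    rw [heq]
    have hpt : ∀ᵐ ω ∂μ, |Real.exp (-s * X ω) - (1 - s * X ω + s^2 * X ω^2 / 2)|
        ≤ (|s|^3 * Real.exp (|s| / r) / 6) * X ω ^ 3 := by
      filter_upwards [hXae] with ω hω
      have ht := taylor3 (-s * X ω)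
      have he1 : 1 + (-s * X ω) + (-s * X ω)^2/2 = 1 - s * X ω + s^2 * X ω^2 / 2 := by ring
      rw [he1] at ht
      refine ht.trans ?_
      have habs : |(-s) * X ω| = |s| * X ω := by rw [abs_mul, abs_neg, abs_of_pos hω.1]
      have h2 : |(-s) * X ω|^3 = |s|^3 * X ω^3 := by rw [habs]; ring
      have h3 : Real.exp |(-s) * X ω| ≤ Real.exp (|s| / r) := by
        apply Real.exp_le_exp.2
        rw [habs]
        calc |s| * X ω ≤ |s| * (1/r) := mul_le_mul_of_nonneg_left hω.2.1 (abs_nonneg s)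
          _ = |s| / r := by ring
      calc |(-s) * X ω|^3 * Real.exp |(-s) * X ω| / 6
          ≤ |(-s) * X ω|^3 * Real.exp (|s| / r) / 6 := by gcongr
        _ = (|s|^3 * Real.exp (|s| / r) / 6) * X ω ^ 3 := by rw [h2]; ring
    calc |∫ ω, (Real.exp (-s * X ω) - (1 - s * X ω + s^2 * X ω^2 / 2)) ∂μ|
        ≤ ∫ ω, |Real.exp (-s * X ω) - (1 - s * X ω + s^2 * X ω^2 / 2)| ∂μ :=
          abs_integral_le_integral_abs
      _ ≤ ∫ ω, (|s|^3 * Real.exp (|s| / r) / 6) * X ω ^ 3 ∂μ :=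
          integral_mono_ae hdint.abs (hX3int.const_mul _) hpt
      _ = (|s|^3 * Real.exp (|s| / r) / 6) * ∫ ω, X ω ^ 3 ∂μ := integral_const_mul _ _
      _ ≤ (|s|^3 * Real.exp (|s| / r) / 6) * C :=
          mul_le_mul_of_nonneg_left hX3 (by positivity)
      _ = |s|^3 * Real.exp (|s| / r) * C / 6 := by ring
  -- bound on s
  have hsb : |s| ≤ A * r := by
    have h1 : |r * θ / mr| ≤ 2 * |θ| / m0 * r := by
      rw [abs_div, abs_of_pos hmrpos, abs_mul, abs_of_pos hr]
      calc r * |θ| / mr ≤ r * |θ| / (m0/2) := by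
            gcongr <;> positivity
        _ = 2 * |θ| / m0 * r := by field_simp
    have h2 : |r^2 * θ^2 * v / (2 * mr^3)| ≤ 8 * θ^2 * σ0 / m0^3 * r := by
      have hnum : |r^2 * θ^2 * v| = r^2 * θ^2 * v := abs_of_nonneg (by positivity)
      rw [abs_div, hnum, abs_of_pos (by positivity : (0:ℝ) < 2 * mr^3)]
      have hm3 : (m0/2)^3 ≤ mr^3 := pow_le_pow_left₀ (by positivity) hmlo 3
      calc r^2 * θ^2 * v / (2 * mr^3) ≤ r * θ^2 * (2*σ0) / (2 * (m0/2)^3) := by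
            have hr2 : r^2 ≤ r := by nlinarith
            calc r^2 * θ^2 * v / (2 * mr^3) ≤ r * θ^2 * (2*σ0) / (2 * mr^3) := by
                  gcongr
              _ ≤ r * θ^2 * (2*σ0) / (2 * (m0/2)^3) := by
                  gcongr <;> positivity
        _ = 8 * θ^2 * σ0 / m0^3 * r := by field_simp; ring
    have h3 : |u| ≤ ε * r := by
      refine hu.trans ?_
      nlinarith [mul_nonneg (mul_nonneg hε.le hr.le) (sub_nonneg.2 hr1)]
    calc |s| ≤ |r * θ / mr| + |r^2 * θ^2 * v / (2 * mr^3)| + |u| := by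
          rw [hs]
          exact (abs_add_le _ _).trans (add_le_add_left (abs_add_le _ _) _)
      _ ≤ 2 * |θ| / m0 * r + 8 * θ^2 * σ0 / m0^3 * r + ε * r := by
          exact add_le_add (add_le_add h1 h2) h3
      _ = A * r := by rw [hA]; ring
  have hA0 : 0 ≤ A := by
    rw [hA]; positivity
  have hsr : |s| / r ≤ A := by
    rw [div_le_iff₀ hr]; exact hsb
  -- w and Q
  set w : ℝ := r^2 * θ^2 * v / (2 * mr^3) + u with hwdef
  have hsw : s = r * θ / mr + w := by rw [hs, hwdef]; ring
  have hW0 : 0 ≤ W := by rw [hW]; positivity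
  have hwb : |w| ≤ W * r^2 := by
    have h2a : r^2 * θ^2 * v / (2 * mr^3) ≤ 8 * θ^2 * σ0 / m0^3 * r^2 := by
      have hm3 : (m0/2)^3 ≤ mr^3 := pow_le_pow_left₀ (by positivity) hmlo 3
      calc r^2 * θ^2 * v / (2 * mr^3) ≤ r^2 * θ^2 * (2*σ0) / (2 * (m0/2)^3) := by
            gcongr <;> positivity
        _ = 8 * θ^2 * σ0 / m0^3 * r^2 := by field_simp; ring
    calc |w| ≤ |r^2 * θ^2 * v / (2 * mr^3)| + |u| := abs_add_le _ _
      _ = r^2 * θ^2 * v / (2 * mr^3) + |u| := by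
          rw [abs_of_nonneg (by positivity : (0:ℝ) ≤ r^2 * θ^2 * v / (2 * mr^3))]
      _ ≤ 8 * θ^2 * σ0 / m0^3 * r^2 + ε * r^2 := add_le_add h2a hu
      _ = W * r^2 := by rw [hW]; ring
  set Q : ℝ := (v + mr^2) * (r * θ * w / mr + w^2/2) with hQdef
  have halg : (1 - s * mr + s^2 * (v + mr^2)/2) - (1 - r * θ + r^2 * θ^2/2 - u * mr) = Q := by
    have hu' : u = w - r^2 * θ^2 * v / (2 * mr^3) := by rw [hwdef]; ring
    rw [hsw, hu', hQdef]
    field_simp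
    ring
  clear_value w Q
  have hQb : |Q| ≤ (2 * σ0 + 4 * m0^2) * (2 * |θ| * W / m0 + W^2/2) * r^3 := by
    have hin : |r * θ * w / mr + w^2/2| ≤ (2 * |θ| * W / m0 + W^2/2) * r^3 := by
      have ht1 : |r * θ * w / mr| ≤ 2 * |θ| * W / m0 * r^3 := by
        rw [abs_div, abs_of_pos hmrpos, abs_mul, abs_mul, abs_of_pos hr]
        calc r * |θ| * |w| / mr ≤ r * |θ| * (W * r^2) / (m0/2) := by
              gcongr <;> positivity
          _ = 2 * |θ| * W / m0 * r^3 := by field_simp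
      have ht2 : |w^2/2| ≤ W^2/2 * r^3 := by
        rw [abs_div, abs_of_nonneg (sq_nonneg w)]
        have hw2 : w^2 ≤ (W * r^2)^2 := by
          rw [← sq_abs w]
          exact pow_le_pow_left₀ (abs_nonneg w) hwb 2
        have hr43 : r^4 ≤ r^3 := pow_le_pow_of_le_one hr.le hr1 (by norm_num)
        have he : (W * r^2)^2 = W^2 * r^4 := by ring
        rw [he] at hw2
        have h5 := mul_le_mul_of_nonneg_left hr43 (sq_nonneg W)
        calc w^2 / |(2:ℝ)| = w^2/2 := by norm_num
          _ ≤ W^2 * r^3 / 2 := by linarith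
          _ = W^2/2 * r^3 := by ring
      calc |r * θ * w / mr + w^2/2| ≤ |r * θ * w / mr| + |w^2/2| := abs_add_le _ _
        _ ≤ 2 * |θ| * W / m0 * r^3 + W^2/2 * r^3 := add_le_add ht1 ht2
        _ = (2 * |θ| * W / m0 + W^2/2) * r^3 := by ring
    have hvm : |v + mr^2| ≤ 2 * σ0 + 4 * m0^2 := by
      rw [abs_of_nonneg (by positivity : (0:ℝ) ≤ v + mr^2)]
      have h6 : mr^2 ≤ (2*m0)^2 := pow_le_pow_left₀ hmrpos.le hmhi 2
      have h7 : (2*m0)^2 = 4*m0^2 := by ring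
      linarith
    calc |Q| = |v + mr^2| * |r * θ * w / mr + w^2/2| := by rw [hQdef, abs_mul]
      _ ≤ (2 * σ0 + 4 * m0^2) * ((2 * |θ| * W / m0 + W^2/2) * r^3) := by
          apply mul_le_mul hvm hin (abs_nonneg _) (by positivity)
      _ = (2 * σ0 + 4 * m0^2) * (2 * |θ| * W / m0 + W^2/2) * r^3 := by ring
  -- exp(-rθ) Taylor
  have hE : |(1 - r * θ + r^2 * θ^2/2) - Real.exp (-(r * θ))|
      ≤ |θ|^3 * Real.exp |θ| / 6 * r^3 := by
    rw [abs_sub_comm]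
    have ht := taylor3 (-(r * θ))
    have he1 : 1 + (-(r * θ)) + (-(r * θ))^2/2 = 1 - r * θ + r^2 * θ^2/2 := by ring
    rw [he1] at ht
    refine ht.trans ?_
    have habs : |(-(r * θ))| = r * |θ| := by rw [abs_neg, abs_mul, abs_of_pos hr]
    rw [habs]
    have h1 : r * |θ| ≤ |θ| := mul_le_of_le_one_left (abs_nonneg θ) hr1
    calc (r * |θ|)^3 * Real.exp (r * |θ|) / 6
        ≤ (r * |θ|)^3 * Real.exp |θ| / 6 := by
          gcongr
      _ = |θ|^3 * Real.exp |θ| / 6 * r^3 := by ring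
  -- assemble
  set I : ℝ := ∫ ω, Real.exp (-s * X ω) ∂μ with hI
  have hbr1 : |I - (1 - s * a + s^2 * b/2)| ≤ A^3 * Real.exp A * C / 6 * r^3 := by
    refine hIT.trans ?_
    have h1 : |s|^3 ≤ (A*r)^3 := pow_le_pow_left₀ (abs_nonneg s) hsb 3
    have h2 : Real.exp (|s|/r) ≤ Real.exp A := Real.exp_le_exp.2 hsr
    calc |s|^3 * Real.exp (|s|/r) * C / 6 ≤ (A*r)^3 * Real.exp A * C / 6 := by
          apply div_le_div_of_nonneg_right ?_ (by norm_num)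
          apply mul_le_mul ?_ le_rfl hC0 (by positivity)
          exact mul_le_mul h1 h2 (Real.exp_pos _).le (by positivity)
      _ = A^3 * Real.exp A * C / 6 * r^3 := by ring
  have hbr2 : |s * (mr - a)| ≤ A * C * r^3 := by
    rw [abs_mul]
    calc |s| * |mr - a| ≤ (A * r) * (C * r^2) :=
          mul_le_mul hsb hma (abs_nonneg _) (by positivity)
      _ = A * C * r^3 := by ring
  have hbr3 : |s^2 * (b - (v + mr^2))/2| ≤ A^2 * C / 2 * r^3 := by
    rw [abs_div, abs_mul]
    have h1 : |s^2| ≤ (A*r)^2 := by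
      rw [abs_of_nonneg (sq_nonneg s), ← sq_abs s]
      exact pow_le_pow_left₀ (abs_nonneg s) hsb 2
    have h2 : |b - (v + mr^2)| ≤ C * r := by rw [abs_sub_comm]; exact hvb
    calc |s^2| * |b - (v + mr^2)| / |(2:ℝ)| = |s^2| * |b - (v + mr^2)| / 2 := by norm_num
      _ ≤ (A*r)^2 * (C * r) / 2 := by
          apply div_le_div_of_nonneg_right ?_ (by norm_num)
          exact mul_le_mul h1 h2 (abs_nonneg _) (by positivity)
      _ = A^2 * C / 2 * r^3 := by ring
  have hdecomp : I - Real.exp (-(r * θ)) + u * mr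
      = (I - (1 - s * a + s^2 * b/2)) + s * (mr - a) + s^2 * (b - (v + mr^2))/2 + Q
        + ((1 - r * θ + r^2 * θ^2/2) - Real.exp (-(r * θ))) := by
    linear_combination halg
  calc |I - Real.exp (-(r * θ)) + u * mr|
      = |(I - (1 - s * a + s^2 * b/2)) + s * (mr - a) + s^2 * (b - (v + mr^2))/2 + Q
        + ((1 - r * θ + r^2 * θ^2/2) - Real.exp (-(r * θ)))| := by rw [hdecomp]
    _ ≤ |(I - (1 - s * a + s^2 * b/2)) + s * (mr - a) + s^2 * (b - (v + mr^2))/2 + Q|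
        + |(1 - r * θ + r^2 * θ^2/2) - Real.exp (-(r * θ))| := abs_add_le _ _
    _ ≤ (|(I - (1 - s * a + s^2 * b/2)) + s * (mr - a) + s^2 * (b - (v + mr^2))/2| + |Q|)
        + |(1 - r * θ + r^2 * θ^2/2) - Real.exp (-(r * θ))| := by
        apply add_le_add_left (abs_add_le _ _)
    _ ≤ ((|(I - (1 - s * a + s^2 * b/2)) + s * (mr - a)| + |s^2 * (b - (v + mr^2))/2|) + |Q|)
        + |(1 - r * θ + r^2 * θ^2/2) - Real.exp (-(r * θ))| := by
        apply add_le_add_left (add_le_add_left (abs_add_le _ _) _)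
    _ ≤ (((|I - (1 - s * a + s^2 * b/2)| + |s * (mr - a)|) + |s^2 * (b - (v + mr^2))/2|) + |Q|)
        + |(1 - r * θ + r^2 * θ^2/2) - Real.exp (-(r * θ))| := by
        apply add_le_add_left (add_le_add_left (add_le_add_left (abs_add_le _ _) _) _)
    _ ≤ (((A^3 * Real.exp A * C / 6 * r^3 + A * C * r^3) + A^2 * C / 2 * r^3)
        + (2 * σ0 + 4 * m0^2) * (2 * |θ| * W / m0 + W^2/2) * r^3)
        + |θ|^3 * Real.exp |θ| / 6 * r^3 := by
        exact add_le_add (add_le_add (add_le_add (add_le_add hbr1 hbr2) hbr3) hQb) hE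
    _ = K * r^3 := by rw [hK]; ring


set_option maxHeartbeats 1000000 in
theorem stmt1 {Ω : Type*} [MeasurableSpace Ω]
    (P : ℝ → Measure Ω) (hP : ∀ r ∈ Set.Ioc (0:ℝ) 1, IsProbabilityMeasure (P r))
    (T : ℝ → Ω → ℝ) (hmeas : ∀ r ∈ Set.Ioc (0:ℝ) 1, Measurable (T r))
    (hTpos : ∀ r ∈ Set.Ioc (0:ℝ) 1, ∀ᵐ ω ∂(P r), 0 < T r ω)
    (hint3 : ∀ r ∈ Set.Ioc (0:ℝ) 1, Integrable (fun ω => (T r ω)^3) (P r))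
    (hbd3 : ∃ C : ℝ, ∀ r ∈ Set.Ioc (0:ℝ) 1, ∫ ω, (T r ω)^3 ∂(P r) ≤ C)
    (m σ2 : ℝ → ℝ)
    (hm : ∀ r ∈ Set.Ioc (0:ℝ) 1, m r = ∫ ω, T r ω ∂(P r))
    (hmpos : ∀ r ∈ Set.Ioc (0:ℝ) 1, 0 < m r)
    (hσ2 : ∀ r ∈ Set.Ioc (0:ℝ) 1, σ2 r = ∫ ω, (T r ω - m r)^2 ∂(P r))
    (m0 σ0 : ℝ) (hm0 : 0 < m0) (hσ0 : 0 < σ0)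
    (hmlim : Filter.Tendsto m (nhdsWithin 0 (Set.Ioi 0)) (nhds m0))
    (hσlim : Filter.Tendsto σ2 (nhdsWithin 0 (Set.Ioi 0)) (nhds σ0))
    (η : ℝ → ℝ → ℝ)
    (hη : ∀ r ∈ Set.Ioc (0:ℝ) 1, ∀ θ : ℝ,
      Real.exp θ * ∫ ω, Real.exp (-(η r θ) * min (T r ω) (1/r)) ∂(P r) = 1)
    (θ : ℝ) :
    Filter.Tendsto
      (fun r => (η r (r * θ) - (1 / m r) * r * θ
          - (1/2) * (1 / m r)^3 * σ2 r * r^2 * θ^2) / r^2)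
      (nhdsWithin 0 (Set.Ioi 0)) (nhds 0) := by
  obtain ⟨C, hC⟩ := hbd3
  have h1mem : (1:ℝ) ∈ Set.Ioc (0:ℝ) 1 := by norm_num
  have hC0 : 0 ≤ C := by
    refine le_trans ?_ (hC 1 h1mem)
    apply integral_nonneg_of_ae
    filter_upwards [hTpos 1 h1mem] with ω hω
    positivity
  rw [Metric.tendsto_nhds]
  intro ε hε
  obtain ⟨A, hA⟩ : ∃ A : ℝ, A = 2 * |θ| / m0 + 8 * θ ^ 2 * σ0 / m0 ^ 3 + ε := ⟨_, rfl⟩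
  obtain ⟨W, hW⟩ : ∃ W : ℝ, W = 8 * θ ^ 2 * σ0 / m0 ^ 3 + ε := ⟨_, rfl⟩
  obtain ⟨K, hK⟩ : ∃ K : ℝ, K = (2 * σ0 + 4 * m0 ^ 2) * (2 * |θ| * W / m0 + W ^ 2 / 2)
      + A ^ 3 * Real.exp A * C / 6 + A * C + A ^ 2 * C / 2
      + |θ| ^ 3 * Real.exp |θ| / 6 := ⟨_, rfl⟩
  have hW0 : 0 ≤ W := by
    rw [hW]
    have h1 : 0 ≤ 8 * θ ^ 2 * σ0 / m0 ^ 3 :=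
      div_nonneg (by nlinarith [sq_nonneg θ, hσ0.le]) (pow_nonneg hm0.le 3)
    linarith
  have hA0 : 0 ≤ A := by
    rw [hA]
    have h1 : 0 ≤ 2 * |θ| / m0 := div_nonneg (by positivity) hm0.le
    have h2 : 0 ≤ 8 * θ ^ 2 * σ0 / m0 ^ 3 :=
      div_nonneg (by nlinarith [sq_nonneg θ, hσ0.le]) (pow_nonneg hm0.le 3)
    linarith
  have hK0 : 0 ≤ K := by
    rw [hK]
    have h1 : 0 ≤ 2 * σ0 + 4 * m0 ^ 2 := by nlinarith [sq_nonneg m0]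
    have h2 : 0 ≤ 2 * |θ| * W / m0 + W ^ 2 / 2 := by
      have h2a : 0 ≤ 2 * |θ| * W / m0 :=
        div_nonneg (mul_nonneg (mul_nonneg (by norm_num) (abs_nonneg θ)) hW0) hm0.le
      nlinarith [sq_nonneg W]
    have h3 : 0 ≤ A ^ 3 * Real.exp A * C / 6 := by
      have := Real.exp_pos A
      have := pow_nonneg hA0 3
      positivity
    have h4 : 0 ≤ A * C := mul_nonneg hA0 hC0
    have h5 : 0 ≤ A ^ 2 * C / 2 := by positivity
    have h6 : 0 ≤ |θ| ^ 3 * Real.exp |θ| / 6 := by positivity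
    have h7 : 0 ≤ (2 * σ0 + 4 * m0 ^ 2) * (2 * |θ| * W / m0 + W ^ 2 / 2) :=
      mul_nonneg h1 h2
    linarith
  obtain ⟨δ, hδdef⟩ : ∃ d : ℝ, d = ε * m0 / (2 * (K + 1)) := ⟨_, rfl⟩
  have hδ : 0 < δ := by
    rw [hδdef]
    exact div_pos (mul_pos hε hm0) (by linarith)
  have hev1 : ∀ᶠ r in nhdsWithin (0:ℝ) (Set.Ioi 0), r ∈ Set.Ioc (0:ℝ) 1 :=
    Filter.eventually_mem_set.2 (Ioc_mem_nhdsGT_of_mem (by constructor <;> norm_num))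
  have hev2 : ∀ᶠ r in nhdsWithin (0:ℝ) (Set.Ioi 0), r < δ := by
    have h := Ioo_mem_nhdsGT_of_mem (show (0:ℝ) ∈ Set.Ico 0 δ from ⟨le_refl _, hδ⟩)
    filter_upwards [h] with r hr using hr.2
  have hev3 : ∀ᶠ r in nhdsWithin (0:ℝ) (Set.Ioi 0), |m r - m0| < m0 / 2 := by
    have h := Metric.tendsto_nhds.mp hmlim (m0 / 2) (by positivity)
    simpa [Real.dist_eq] using h
  have hev4 : ∀ᶠ r in nhdsWithin (0:ℝ) (Set.Ioi 0), |σ2 r - σ0| < σ0 := by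
    have h := Metric.tendsto_nhds.mp hσlim σ0 hσ0
    simpa [Real.dist_eq] using h
  filter_upwards [hev1, hev2, hev3, hev4] with r hrIoc hrδ hm2 hs2
  rw [Real.dist_eq, sub_zero]
  obtain ⟨hr0, hr1⟩ := hrIoc
  have hrIoc' : r ∈ Set.Ioc (0:ℝ) 1 := ⟨hr0, hr1⟩
  haveI : IsProbabilityMeasure (P r) := hP r hrIoc'
  have hmab := abs_lt.mp hm2
  have hsab := abs_lt.mp hs2
  have hmlo : m0 / 2 ≤ m r := by linarith [hmab.1]
  have hmhi : m r ≤ 2 * m0 := by linarith [hmab.2]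
  have hvhi : σ2 r ≤ 2 * σ0 := by linarith [hsab.2]
  have hmrpos : 0 < m r := lt_of_lt_of_le (by positivity) hmlo
  -- the defining equation for η
  have hηeq : ∫ ω, Real.exp (-(η r (r * θ)) * min (T r ω) (1 / r)) ∂(P r)
      = Real.exp (-(r * θ)) := by
    have h := hη r hrIoc' (r * θ)
    rw [Real.exp_neg]
    exact (inv_eq_of_mul_eq_one_right h).symm
  -- apply core with u = ε r² and u = -ε r²
  obtain ⟨sp, hsp⟩ : ∃ x : ℝ,
      x = r * θ / m r + r ^ 2 * θ ^ 2 * σ2 r / (2 * (m r) ^ 3) + ε * r ^ 2 := ⟨_, rfl⟩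
  obtain ⟨sm, hsm⟩ : ∃ x : ℝ,
      x = r * θ / m r + r ^ 2 * θ ^ 2 * σ2 r / (2 * (m r) ^ 3) + -(ε * r ^ 2) := ⟨_, rfl⟩
  have hup : |ε * r ^ 2| ≤ ε * r ^ 2 :=
    le_of_eq (abs_of_nonneg (mul_nonneg hε.le (sq_nonneg r)))
  have hum : |-(ε * r ^ 2)| ≤ ε * r ^ 2 := by rw [abs_neg]; exact hup
  have hcorep := core (P r) (T r) (hmeas r hrIoc') (hTpos r hrIoc') (hint3 r hrIoc')
    r θ ε m0 σ0 C (m r) (σ2 r) (ε * r ^ 2) sp A W K hr0 hr1 (hC r hrIoc')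
    (hm r hrIoc') (hσ2 r hrIoc') hm0 hmlo hmhi hσ0 hvhi hε hup hsp hA hW hK
  have hcorem := core (P r) (T r) (hmeas r hrIoc') (hTpos r hrIoc') (hint3 r hrIoc')
    r θ ε m0 σ0 C (m r) (σ2 r) (-(ε * r ^ 2)) sm A W K hr0 hr1 (hC r hrIoc')
    (hm r hrIoc') (hσ2 r hrIoc') hm0 hmlo hmhi hσ0 hvhi hε hum hsm hA hW hK
  -- smallness of K r³
  have hKr : K * r ^ 3 < ε * r ^ 2 * m r := by
    have hKd : K * δ < ε * m0 / 2 := by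
      rw [hδdef, mul_div_assoc']
      rw [div_lt_div_iff₀ (by linarith : (0:ℝ) < 2 * (K + 1)) (by norm_num : (0:ℝ) < 2)]
      nlinarith [mul_pos hε hm0]
    have h1 : K * r ≤ K * δ := mul_le_mul_of_nonneg_left hrδ.le hK0
    have h2 : K * r < ε * m0 / 2 := lt_of_le_of_lt h1 hKd
    have h3 : (K * r) * r ^ 2 < (ε * m0 / 2) * r ^ 2 :=
      mul_lt_mul_of_pos_right h2 (by positivity)
    have h4 : (ε * m0 / 2) * r ^ 2 ≤ ε * r ^ 2 * m r := by
      have : ε * (m0 / 2) ≤ ε * m r := mul_le_mul_of_nonneg_left hmlo hε.le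
      nlinarith [sq_nonneg r]
    nlinarith
  -- strict inequalities for the integrals
  have hltp : ∫ ω, Real.exp (-sp * min (T r ω) (1 / r)) ∂(P r) < Real.exp (-(r * θ)) := by
    have h := (abs_le.mp hcorep).2
    linarith
  have hgtm : Real.exp (-(r * θ)) < ∫ ω, Real.exp (-sm * min (T r ω) (1 / r)) ∂(P r) := by
    have h := (abs_le.mp hcorem).1
    linarith
  -- trap η between s₋ and s₊
  have hBae : ∀ᵐ ω ∂(P r), 0 ≤ min (T r ω) (1 / r) ∧ |min (T r ω) (1 / r)| ≤ 1 / r := by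
    filter_upwards [hTpos r hrIoc'] with ω hω
    have h1 : 0 < min (T r ω) (1 / r) := lt_min hω (by positivity)
    exact ⟨h1.le, by rw [abs_of_pos h1]; exact min_le_right _ _⟩
  have hXm : Measurable (fun ω => min (T r ω) (1 / r)) :=
    (hmeas r hrIoc').min measurable_const
  have hup' : η r (r * θ) < sp :=
    trap (P r) (fun ω => min (T r ω) (1 / r)) hXm (1 / r) hBae _ _ _ hηeq hltp
  have hlo' : sm < η r (r * θ) :=
    trap' (P r) (fun ω => min (T r ω) (1 / r)) hXm (1 / r) hBae _ _ _ hηeq hgtm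
  -- conclude
  have hid : (1 / m r) * r * θ + (1/2) * (1 / m r) ^ 3 * σ2 r * r ^ 2 * θ ^ 2
      = r * θ / m r + r ^ 2 * θ ^ 2 * σ2 r / (2 * (m r) ^ 3) := by
    field_simp
    try ring
    try simp
  rw [abs_div, abs_of_pos (by positivity : (0:ℝ) < r ^ 2), div_lt_iff₀ (by positivity : (0:ℝ) < r ^ 2)]
  rw [hsp] at hup'
  rw [hsm] at hlo'
  rw [abs_lt]
  constructor
  · nlinarith [hlo', hid]
  · nlinarith [hup', hid]
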